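/- arXiv:2604.19948 — 2 statements merged into one kernel-verified Lean document; each statement's English description precedes it below -/
import Mathlib

section
/- Let n ≥ 1, let p ∈ ℝⁿ, let j ∈ {1, …, n}, let c ∈ ℝ, and let v, w, π : ℝⁿ → ℝ be ℤⁿ-periodic C² functions such that: (a) (1/2)Δπ(x) + div((p + ∇v(x)) π(x)) = 0 for all x ∈ ℝⁿ; (b) ∫_{[0,1]ⁿ} π(x) dx = 1; (c) −(1/2)Δw(x) + (p + ∇v(x))·(e_j + ∇w(x)) = c for all x ∈ ℝⁿ, where e_j is the j-th standard basis vector. Then c = ∫_{[0,1]ⁿ} (p_j + ∂_j v(x)) π(x) dx. -/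
open scoped RealInnerProductSpace
open MeasureTheory

/-- The Euclidean Laplacian: sum of second partial derivatives. -/
noncomputable def lap {n : ℕ} (f : EuclideanSpace ℝ (Fin n) → ℝ)
    (x : EuclideanSpace ℝ (Fin n)) : ℝ :=
  ∑ i : Fin n,
    fderiv ℝ (fun y => fderiv ℝ f y (EuclideanSpace.single i 1)) x (EuclideanSpace.single i 1)

/-- The divergence of a vector field: sum of partial derivatives of the components. -/
noncomputable def dvg {n : ℕ} (F : EuclideanSpace ℝ (Fin n) → EuclideanSpace ℝ (Fin n))
    (x : EuclideanSpace ℝ (Fin n)) : ℝ :=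
  ∑ i : Fin n, fderiv ℝ (fun y => F y i) x (EuclideanSpace.single i 1)

/-- A function on ℝⁿ is ℤⁿ-periodic if it is invariant under translation by
every integer vector. -/
def IsZnPeriodic {n : ℕ} {α : Type*} (f : EuclideanSpace ℝ (Fin n) → α) : Prop :=
  ∀ (x : EuclideanSpace ℝ (Fin n)) (k : Fin n → ℤ),
    f (x + ∑ i : Fin n, (k i : ℝ) • EuclideanSpace.single i (1 : ℝ)) = f x

/-- The unit cube [0,1]ⁿ in ℝⁿ. -/
def unitCube (n : ℕ) : Set (EuclideanSpace ℝ (Fin n)) :=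
  {x | ∀ i, x i ∈ Set.Icc (0 : ℝ) 1}


variable {n : ℕ}
local notation "E" => EuclideanSpace ℝ (Fin n)

/-- partial derivative in direction i -/
noncomputable def pdv {n : ℕ} (f : EuclideanSpace ℝ (Fin n) → ℝ) (i : Fin n)
    (x : EuclideanSpace ℝ (Fin n)) : ℝ :=
  fderiv ℝ f x (EuclideanSpace.single i 1)

lemma grad_apply (f : E → ℝ) (x : E) (i : Fin n) : gradient f x i = pdv f i x := by
  have : gradient f x i = ⟪gradient f x, EuclideanSpace.single i (1:ℝ)⟫ := by
    rw [EuclideanSpace.inner_single_right]; simp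
  rw [this, gradient, InnerProductSpace.toDual_symm_apply]; rfl

lemma fderiv_comp_add' {F' : Type*} [NormedAddCommGroup F'] [NormedSpace ℝ F']
    (f : E → F') (x s : E) :
    fderiv ℝ (fun y => f (y + s)) x = fderiv ℝ f (x + s) := by
  by_cases h : DifferentiableAt ℝ f (x + s)
  · exact (h.hasFDerivAt.comp x ((hasFDerivAt_id x).add_const s)).fderiv.trans (by simp)
  · rw [fderiv_zero_of_not_differentiableAt h, fderiv_zero_of_not_differentiableAt]
    intro hc
    have h1 : DifferentiableAt ℝ (fun y => f (y + s)) (x + s + -s) := by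
      rw [add_neg_cancel_right]; exact hc
    have h2 : DifferentiableAt ℝ ((fun z => f (z + s)) ∘ (fun y => y + -s)) (x + s) :=
      DifferentiableAt.comp _ h1 ((differentiableAt_id).add_const (-s))
    simp only [Function.comp_def, neg_add_cancel_right] at h2
    exact h h2

lemma IsZnPeriodic.fderiv_periodic {F' : Type*} [NormedAddCommGroup F'] [NormedSpace ℝ F']
    {f : E → F'} (hf : IsZnPeriodic f) : IsZnPeriodic (fderiv ℝ f) := by
  intro x k
  rw [← fderiv_comp_add' f x _]
  congr 1
  exact funext fun y => hf y k

lemma IsZnPeriodic.add_single {α : Type*} {f : E → α} (hf : IsZnPeriodic f) (x : E) (i : Fin n) :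
    f (x + EuclideanSpace.single i 1) = f x := by
  have h := hf x (Pi.single i 1)
  rw [Finset.sum_eq_single i] at h
  · simpa using h
  · intro b _ hb; simp [Pi.single_apply, hb]
  · simp

lemma unitCube_eq : unitCube n = ((MeasurableEquiv.toLp 2 (Fin n → ℝ)).symm) ⁻¹' (Set.Icc 0 1) := by
  ext x
  simp [unitCube, Set.mem_Icc, Pi.le_def, Set.mem_preimage, forall_and]

lemma integral_unitCube_eq (h : E → ℝ) :
    ∫ x in unitCube n, h x =
      ∫ y in Set.Icc (0 : Fin n → ℝ) 1, h (((MeasurableEquiv.toLp 2 (Fin n → ℝ)).symm).symm y) := by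
  rw [unitCube_eq,
    ← (EuclideanSpace.volume_preserving_symm_measurableEquiv_toLp (Fin n)).setIntegral_preimage_emb
      (MeasurableEquiv.measurableEmbedding _)
      (fun y => h (((MeasurableEquiv.toLp 2 (Fin n → ℝ)).symm).symm y)) _]
  simp

lemma insertNth_one_eq {m : ℕ} (i : Fin (m+1)) (x : Fin m → ℝ) :
    Fin.insertNth i (1:ℝ) x = (Fin.insertNth i (0:ℝ) x + Pi.single i 1 : Fin (m+1) → ℝ) := by
  ext t
  refine Fin.succAboveCases i ?_ ?_ t
  · simp
  · intro j
    simp [Fin.insertNth_apply_succAbove, Pi.single_apply, (Fin.succAbove_ne i j)]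

lemma integral_pd_zero (m : ℕ) (Gc : Fin (m+1) → EuclideanSpace ℝ (Fin (m+1)) → ℝ)
    (hc : ∀ i, ContDiff ℝ 1 (Gc i)) (hp : ∀ i, IsZnPeriodic (Gc i)) :
    ∫ x in unitCube (m+1), ∑ i, fderiv ℝ (Gc i) x (EuclideanSpace.single i 1) = 0 := by
  set ε : (Fin (m+1) → ℝ) ≃L[ℝ] EuclideanSpace ℝ (Fin (m+1)) :=
    (EuclideanSpace.equiv (Fin (m+1)) ℝ).symm with hε
  have hεs : ∀ i, ε (Pi.single i 1) = EuclideanSpace.single i (1:ℝ) := fun i => rfl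
  have key := MeasureTheory.integral_divergence_of_hasFDerivAt_off_countable'
    (0 : Fin (m+1) → ℝ) 1 zero_le_one
    (fun i y => Gc i (ε y))
    (fun i y => (fderiv ℝ (Gc i) (ε y)).comp (ε : (Fin (m+1) → ℝ) →L[ℝ] _))
    ∅ Set.countable_empty
    (fun i => ((hc i).continuous.comp ε.continuous).continuousOn)
    (fun x _ i => (((hc i).differentiable one_ne_zero (ε x)).hasFDerivAt).comp x (ε.hasFDerivAt))
    ?_
  · rw [integral_unitCube_eq]
    have hfn : ∀ y : Fin (m+1) → ℝ,
        (∑ i, fderiv ℝ (Gc i) (((MeasurableEquiv.toLp 2 (Fin (m+1) → ℝ)).symm).symm y)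
          (EuclideanSpace.single i 1))
        = ∑ i, ((fderiv ℝ (Gc i) (ε y)).comp
            (ε : (Fin (m+1) → ℝ) →L[ℝ] _)) (Pi.single i 1) := by
      intro y; rfl
    rw [MeasureTheory.setIntegral_congr_fun measurableSet_Icc (fun y _ => hfn y), key]
    apply Finset.sum_eq_zero
    intro i _
    rw [sub_eq_zero]
    apply MeasureTheory.setIntegral_congr_fun measurableSet_Icc
    intro x _
    show Gc i (ε (Fin.insertNth i 1 x)) = Gc i (ε (Fin.insertNth i 0 x))
    rw [insertNth_one_eq, map_add, hεs]
    exact (hp i).add_single _ i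
  · apply (ContinuousOn.integrableOn_compact isCompact_Icc)
    apply Continuous.continuousOn
    apply continuous_finset_sum
    intro i _
    exact (((hc i).continuous_fderiv one_ne_zero).comp ε.continuous).clm_apply continuous_const

lemma IsZnPeriodic.pdv_periodic {f : E → ℝ} (hf : IsZnPeriodic f) (i : Fin n) :
    IsZnPeriodic (pdv f i) := fun x k =>
  congrArg (fun L => L (EuclideanSpace.single i 1)) (hf.fderiv_periodic x k)

lemma contDiff_pdv {f : E → ℝ} (hf : ContDiff ℝ 2 f) (i : Fin n) :
    ContDiff ℝ 1 (pdv f i) :=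
  (hf.fderiv_right (m := 1) (by norm_num)).clm_apply contDiff_const

lemma unitCube_compact : IsCompact (unitCube n) := by
  have : unitCube n = (EuclideanSpace.equiv (Fin n) ℝ).symm '' Set.Icc 0 1 := by
    ext x
    constructor
    · intro hx
      refine ⟨EuclideanSpace.equiv (Fin n) ℝ x, ?_, rfl⟩
      simp only [Set.mem_Icc, Pi.le_def]
      exact ⟨fun i => (hx i).1, fun i => (hx i).2⟩
    · rintro ⟨y, hy, rfl⟩
      simp only [Set.mem_Icc, Pi.le_def] at hy
      intro i
      exact ⟨hy.1 i, hy.2 i⟩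
  rw [this]
  exact isCompact_Icc.image (EuclideanSpace.equiv (Fin n) ℝ).symm.continuous

/-- if π is a normalized invariant density for the drift p + ∇v and w
solves the differentiated cell problem −(1/2)Δw + (p + ∇v)·(e_j + ∇w) = c, then
c = ∫_{[0,1]ⁿ} (p_j + ∂_j v) π dx. -/
theorem effective_drift_formula (n : ℕ) (hn : 1 ≤ n)
    (p : EuclideanSpace ℝ (Fin n)) (j : Fin n) (c : ℝ)
    (v w π : EuclideanSpace ℝ (Fin n) → ℝ)
    (hv : ContDiff ℝ 2 v) (hw : ContDiff ℝ 2 w) (hπ : ContDiff ℝ 2 π)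
    (hvp : IsZnPeriodic v) (hwp : IsZnPeriodic w) (hπp : IsZnPeriodic π)
    (hstat : ∀ x, (1/2) * lap π x + dvg (fun y => π y • (p + gradient v y)) x = 0)
    (hnorm : ∫ x in unitCube n, π x = 1)
    (hcell : ∀ x, -(1/2) * lap w x
        + ⟪p + gradient v x, EuclideanSpace.single j 1 + gradient w x⟫ = c) :
    c = ∫ x in unitCube n, (p j + gradient v x j) * π x := by
  obtain ⟨m, rfl⟩ : ∃ m, n = m + 1 := ⟨n - 1, by omega⟩
  have hw1 : ContDiff ℝ 1 w := hw.of_le one_le_two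
  have hπ1 : ContDiff ℝ 1 π := hπ.of_le one_le_two
  set Gc : Fin (m+1) → EuclideanSpace ℝ (Fin (m+1)) → ℝ := fun i x =>
    (1/2) * (w x * pdv π i x) - (1/2) * (π x * pdv w i x)
      + w x * (π x * (p i + pdv v i x)) with hGc
  have hGc1 : ∀ i, ContDiff ℝ 1 (Gc i) := fun i =>
    ((contDiff_const.mul (hw1.mul (contDiff_pdv hπ i))).sub
      (contDiff_const.mul (hπ1.mul (contDiff_pdv hw i)))).add
      (hw1.mul (hπ1.mul (contDiff_const.add (contDiff_pdv hv i))))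
  have hGcp : ∀ i, IsZnPeriodic (Gc i) := by
    intro i x k
    simp only [hGc]
    rw [hwp x k, hπp x k, (hπp.pdv_periodic i) x k, (hwp.pdv_periodic i) x k,
      (hvp.pdv_periodic i) x k]
  have hkey : ∀ x, (∑ i, fderiv ℝ (Gc i) x (EuclideanSpace.single i 1))
      = π x * (c - (p j + gradient v x j)) := by
    intro x
    have hw' := hw1.differentiable one_ne_zero
    have hπ' := hπ1.differentiable one_ne_zero
    have hstep : ∀ i, fderiv ℝ (Gc i) x (EuclideanSpace.single i 1)
        = (1/2 * w x) * pdv (pdv π i) i x - (1/2 * π x) * pdv (pdv w i) i x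
          + π x * ((p i + pdv v i x) * pdv w i x)
          + w x * fderiv ℝ (fun y => π y * (p i + pdv v i y)) x (EuclideanSpace.single i 1) := by
      intro i
      have hDπ := (contDiff_pdv hπ i).differentiable one_ne_zero
      have hDw := (contDiff_pdv hw i).differentiable one_ne_zero
      have hDv := (contDiff_pdv hv i).differentiable one_ne_zero
      have h1 : HasFDerivAt (fun y => w y * pdv π i y)
          (w x • fderiv ℝ (pdv π i) x + pdv π i x • fderiv ℝ w x) x :=
        (hw' x).hasFDerivAt.mul (hDπ x).hasFDerivAt
      have h2 : HasFDerivAt (fun y => π y * pdv w i y)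
          (π x • fderiv ℝ (pdv w i) x + pdv w i x • fderiv ℝ π x) x :=
        (hπ' x).hasFDerivAt.mul (hDw x).hasFDerivAt
      have hlin : HasFDerivAt (fun y => p i + pdv v i y) (fderiv ℝ (pdv v i) x) x :=
        ((hDv x).hasFDerivAt).const_add (p i)
      have h3 : HasFDerivAt (fun y => π y * (p i + pdv v i y))
          (π x • fderiv ℝ (pdv v i) x + (p i + pdv v i x) • fderiv ℝ π x) x :=
        (hπ' x).hasFDerivAt.mul hlin
      have h4 : HasFDerivAt (fun y => w y * (π y * (p i + pdv v i y)))
          (w x • (π x • fderiv ℝ (pdv v i) x + (p i + pdv v i x) • fderiv ℝ π x)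
            + (π x * (p i + pdv v i x)) • fderiv ℝ w x) x :=
        (hw' x).hasFDerivAt.mul h3
      have hG : HasFDerivAt (Gc i)
          (((1:ℝ)/2) • (w x • fderiv ℝ (pdv π i) x + pdv π i x • fderiv ℝ w x)
            - ((1:ℝ)/2) • (π x • fderiv ℝ (pdv w i) x + pdv w i x • fderiv ℝ π x)
            + (w x • (π x • fderiv ℝ (pdv v i) x + (p i + pdv v i x) • fderiv ℝ π x)
              + (π x * (p i + pdv v i x)) • fderiv ℝ w x)) x :=
        ((h1.const_mul (1/2)).sub (h2.const_mul (1/2))).add h4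
      rw [hG.fderiv, h3.fderiv]
      simp only [ContinuousLinearMap.add_apply, ContinuousLinearMap.coe_sub',
        Pi.sub_apply, ContinuousLinearMap.coe_smul', Pi.smul_apply, smul_eq_mul]
      simp only [pdv]
      ring
    rw [Finset.sum_congr rfl (fun i _ => hstep i)]
    have hlapπ : ∑ i, pdv (pdv π i) i x = lap π x := rfl
    have hlapw : ∑ i, pdv (pdv w i) i x = lap w x := rfl
    have hdvg : ∑ i, fderiv ℝ (fun y => π y * (p i + pdv v i y)) x (EuclideanSpace.single i 1)
        = dvg (fun y => π y • (p + gradient v y)) x := by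
      unfold dvg
      apply Finset.sum_congr rfl
      intro i _
      have hfe : (fun y => (π y • (p + gradient v y) : EuclideanSpace ℝ (Fin (m+1))) i)
          = fun y => π y * (p i + pdv v i y) := by
        funext y
        simp [PiLp.smul_apply, PiLp.add_apply, smul_eq_mul, grad_apply]
        ring
      rw [hfe]
    have hin1 : ⟪p + gradient v x, EuclideanSpace.single j 1 + gradient w x⟫
        = (p j + gradient v x j) + ∑ i, (p i + pdv v i x) * pdv w i x := by
      rw [inner_add_right]
      congr 1
      · rw [EuclideanSpace.inner_single_right]
        simp [PiLp.add_apply]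
      · rw [PiLp.inner_apply]
        apply Finset.sum_congr rfl
        intro i _
        simp [PiLp.add_apply, grad_apply]
        ring
    have hstat' := hstat x
    have hcell' := hcell x
    rw [hin1] at hcell'
    rw [Finset.sum_add_distrib, Finset.sum_add_distrib, Finset.sum_sub_distrib,
      ← Finset.mul_sum, ← Finset.mul_sum, ← Finset.mul_sum, ← Finset.mul_sum,
      hlapπ, hlapw, hdvg]
    linear_combination w x * hstat' + π x * hcell'
  have hmeas : MeasurableSet (unitCube (m+1)) := unitCube_compact.measurableSet
  have hzero := integral_pd_zero m Gc hGc1 hGcp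
  rw [MeasureTheory.setIntegral_congr_fun hmeas (fun x _ => hkey x)] at hzero
  have hπc : Continuous π := hπ1.continuous
  have hqc : Continuous (fun x : EuclideanSpace ℝ (Fin (m+1)) => p j + gradient v x j) := by
    have : (fun x : EuclideanSpace ℝ (Fin (m+1)) => p j + gradient v x j)
        = fun x => p j + pdv v j x := by funext x; rw [grad_apply]
    rw [this]
    exact continuous_const.add (contDiff_pdv hv j).continuous
  have hππ : IntegrableOn π (unitCube (m+1)) :=
    hπc.continuousOn.integrableOn_compact unitCube_compact
  have hqq : IntegrableOn (fun x => (p j + gradient v x j) * π x) (unitCube (m+1)) :=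
    (hqc.mul hπc).continuousOn.integrableOn_compact unitCube_compact
  have hsplit : ∫ x in unitCube (m+1), π x * (c - (p j + gradient v x j))
      = c * (∫ x in unitCube (m+1), π x)
        - ∫ x in unitCube (m+1), (p j + gradient v x j) * π x := by
    rw [← MeasureTheory.integral_const_mul, ← MeasureTheory.integral_sub
      (hππ.const_mul c) hqq]
    apply MeasureTheory.setIntegral_congr_fun hmeas
    intro x _
    ring
  rw [hsplit, hnorm] at hzero
  linarith
end

section
/- Let n ≥ 1, let m : ℝⁿ → ℝ be a continuous ℤⁿ-periodic function with m(x) > 0 for all x, let χ : ℝⁿ → ℝ be a C¹ ℤⁿ-periodic function, and let ν ∈ ℝⁿ. If ∫_{[0,1]ⁿ} |ν + ∇χ(x)|² m(x) dx = 0, then ν = 0. -/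
open scoped RealInnerProductSpace
open MeasureTheory

/-- Coordinates of a linear combination of standard basis vectors. -/
lemma sum_single_apply {n : ℕ} (c : Fin n → ℝ) (i : Fin n) :
    (∑ j : Fin n, c j • EuclideanSpace.single j (1:ℝ)) i = c i := by
  have h1 : (∑ j : Fin n, c j • EuclideanSpace.single j (1:ℝ)) i
      = EuclideanSpace.proj (𝕜 := ℝ) i (∑ j : Fin n, c j • EuclideanSpace.single j (1:ℝ)) := rfl
  rw [h1, map_sum]
  have h2 : ∀ j : Fin n, EuclideanSpace.proj (𝕜 := ℝ) i (c j • EuclideanSpace.single j (1:ℝ))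
      = c j * (if i = j then 1 else 0) := by
    intro j
    rw [_root_.map_smul]
    have : EuclideanSpace.proj (𝕜 := ℝ) i (EuclideanSpace.single j (1:ℝ))
        = (EuclideanSpace.single j (1:ℝ)) i := rfl
    simp [this, EuclideanSpace.single_apply]
  simp [h2]

set_option maxHeartbeats 1000000 in
/-- if m > 0 is continuous ℤⁿ-periodic, χ is C¹ ℤⁿ-periodic, and
∫_{[0,1]ⁿ} |ν + ∇χ|² m dx = 0, then ν = 0. -/
theorem effective_diffusion_nondegenerate (n : ℕ) (hn : 1 ≤ n)
    (m : EuclideanSpace ℝ (Fin n) → ℝ) (hmc : Continuous m) (hmp : IsZnPeriodic m)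
    (hmpos : ∀ x, 0 < m x)
    (χ : EuclideanSpace ℝ (Fin n) → ℝ) (hχ : ContDiff ℝ 1 χ) (hχp : IsZnPeriodic χ)
    (ν : EuclideanSpace ℝ (Fin n))
    (hzero : ∫ x in unitCube n, ‖ν + gradient χ x‖^2 * m x = 0) :
    ν = 0 := by
  classical
  set T : (Fin n → ℤ) → EuclideanSpace ℝ (Fin n) :=
    fun k => ∑ i : Fin n, ((k i : ℝ)) • EuclideanSpace.single i (1:ℝ) with hT
  have hχdiff : Differentiable ℝ χ := hχ.differentiable one_ne_zero
  have hgradc : Continuous (gradient χ) :=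
    (InnerProductSpace.toDual ℝ _).symm.continuous.comp (hχ.continuous_fderiv one_ne_zero)
  set f : EuclideanSpace ℝ (Fin n) → ℝ := fun x => ‖ν + gradient χ x‖^2 * m x with hf
  have hfc : Continuous f := (((continuous_const.add hgradc).norm.pow 2).mul hmc)
  have hfnn : ∀ x, 0 ≤ f x := fun x =>
    mul_nonneg (pow_nonneg (norm_nonneg _) 2) (hmpos x).le
  -- the unit cube is compact
  have hcube_closed : IsClosed (unitCube n) := by
    have : unitCube n = ⋂ i : Fin n, (fun x : EuclideanSpace ℝ (Fin n) => x i) ⁻¹' Set.Icc 0 1 := by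
      ext x; simp [unitCube, Set.mem_iInter]
    rw [this]
    exact isClosed_iInter fun i =>
      IsClosed.preimage (EuclideanSpace.proj (𝕜 := ℝ) i).continuous isClosed_Icc
  have hcube_bdd : Bornology.IsBounded (unitCube n) := by
    rw [Metric.isBounded_iff_subset_closedBall 0]
    refine ⟨Real.sqrt n, fun x hx => ?_⟩
    simp only [Metric.mem_closedBall, dist_zero_right]
    rw [EuclideanSpace.norm_eq]
    have hsum : ∑ i : Fin n, ‖x i‖ ^ 2 ≤ (n : ℝ) := by
      have := Finset.sum_le_sum (s := (Finset.univ : Finset (Fin n)))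
        (g := fun _ => (1:ℝ)) (fun i _ => by
          have h := hx i
          have h1 : |x i| ≤ 1 := abs_le.mpr ⟨by linarith [h.1], h.2⟩
          calc ‖x i‖ ^ 2 = |x i|^2 := by rw [Real.norm_eq_abs]
            _ ≤ 1^2 := pow_le_pow_left₀ (abs_nonneg _) h1 2
            _ = 1 := one_pow 2)
      simpa using this
    exact (Real.sqrt_le_sqrt hsum).trans (by simp)
  have hcube_compact : IsCompact (unitCube n) :=
    Metric.isCompact_of_isClosed_isBounded hcube_closed hcube_bdd
  have hint : IntegrableOn f (unitCube n) := hfc.continuousOn.integrableOn_compact hcube_compact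
  -- f = 0 a.e. on the cube
  have hae : f =ᵐ[volume.restrict (unitCube n)] 0 :=
    (integral_eq_zero_iff_of_nonneg (fun x => hfnn x) hint).mp hzero
  -- the open cube
  set B : Set (EuclideanSpace ℝ (Fin n)) := {x | ∀ i, x i ∈ Set.Ioo (0:ℝ) 1} with hB
  have hBopen : IsOpen B := by
    have : B = ⋂ i : Fin n, (fun x : EuclideanSpace ℝ (Fin n) => x i) ⁻¹' Set.Ioo 0 1 := by
      ext x; simp [hB, Set.mem_iInter]
    rw [this]
    exact isOpen_iInter_of_finite fun i =>
      IsOpen.preimage (EuclideanSpace.proj (𝕜 := ℝ) i).continuous isOpen_Ioo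
  have hBsub : B ⊆ unitCube n := fun x hx i => ⟨(hx i).1.le, (hx i).2.le⟩
  have haeB : f =ᵐ[volume.restrict B] 0 :=
    ae_restrict_of_ae_restrict_of_subset hBsub hae
  have hEqB : Set.EqOn f 0 B :=
    Measure.eqOn_of_ae_eq haeB hfc.continuousOn continuousOn_const
      (by rw [hBopen.interior_eq]; exact subset_closure)
  -- gradient χ = -ν on B
  have hgradB : ∀ x ∈ B, gradient χ x = -ν := by
    intro x hx
    have h0 : f x = 0 := hEqB hx
    have hnorm : ‖ν + gradient χ x‖^2 = 0 := by
      rcases mul_eq_zero.mp h0 with h1 | h2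
      · exact h1
      · exact absurd h2 (hmpos x).ne'
    have hz : ν + gradient χ x = 0 :=
      norm_eq_zero.mp (pow_eq_zero_iff (two_ne_zero) |>.mp hnorm)
    exact (neg_eq_of_add_eq_zero_right hz).symm
  -- the closed cube is contained in the closure of the open cube
  have hcub_cl : unitCube n ⊆ closure B := by
    intro x hx
    rw [mem_closure_iff_seq_limit]
    set c : EuclideanSpace ℝ (Fin n) := WithLp.toLp 2 (fun _ => (1/2 : ℝ)) with hc
    refine ⟨fun k => c + ((k : ℝ)/(k+1)) • (x - c), fun k => ?_, ?_⟩
    · intro i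
      show (c + ((k : ℝ)/(k+1)) • (x - c)) i ∈ Set.Ioo (0:ℝ) 1
      have happ : (c + ((k : ℝ)/(k+1)) • (x - c)) i
          = 1/2 + ((k : ℝ)/(k+1)) * (x i - 1/2) := by
        rw [PiLp.add_apply, PiLp.smul_apply, PiLp.sub_apply]
        norm_num [hc]
      have ht0 : (0:ℝ) ≤ (k : ℝ)/(k+1) :=
        div_nonneg (Nat.cast_nonneg k) (by positivity)
      have ht1 : ((k : ℝ)/(k+1)) < 1 := by
        rw [div_lt_one (by positivity)]; linarith
      have hx0 := (hx i).1
      have hx1 := (hx i).2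
      rw [happ]
      constructor
      · nlinarith
      · nlinarith
    · have h1 : Filter.Tendsto (fun k : ℕ => ((k : ℝ)/(k+1))) Filter.atTop (nhds 1) := by
        simpa using tendsto_natCast_div_add_atTop (𝕜 := ℝ) 1
      have h2 : Filter.Tendsto (fun k : ℕ => c + ((k : ℝ)/(k+1)) • (x - c))
          Filter.atTop (nhds (c + (1:ℝ) • (x - c))) :=
        Filter.Tendsto.const_add c (h1.smul_const (x - c))
      simpa using h2
  -- gradient χ = -ν on the closed cube
  have hgrad_cube : ∀ x ∈ unitCube n, gradient χ x = -ν := fun x hx =>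
    closure_minimal hgradB (isClosed_eq hgradc continuous_const) (hcub_cl hx)
  -- the gradient is ℤⁿ-periodic
  have hgradp : ∀ (x : EuclideanSpace ℝ (Fin n)) (k : Fin n → ℤ),
      gradient χ (x + T k) = gradient χ x := by
    intro x k
    have hfun : (fun y => χ (y + T k)) = χ := funext fun y => hχp y k
    have h1 : HasFDerivAt (fun y => χ (y + T k)) (fderiv ℝ χ (x + T k)) x := by
      have h2 := (hχdiff (x + T k)).hasFDerivAt.comp x ((hasFDerivAt_id x).add_const (T k))
      exact h2
    rw [hfun] at h1
    show (InnerProductSpace.toDual ℝ _).symm (fderiv ℝ χ (x + T k))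
        = (InnerProductSpace.toDual ℝ _).symm (fderiv ℝ χ x)
    rw [h1.fderiv]
  -- gradient χ = -ν everywhere
  have hgrad_all : ∀ x, gradient χ x = -ν := by
    intro x
    set k : Fin n → ℤ := fun i => ⌊x i⌋ with hk
    have hy : x - T k ∈ unitCube n := by
      intro i
      have happ : (x - T k) i = x i - (⌊x i⌋ : ℝ) := by
        rw [PiLp.sub_apply]
        simp only [hT, hk]
        rw [sum_single_apply]
      rw [happ]
      constructor
      · linarith [Int.floor_le (x i)]
      · linarith [Int.lt_floor_add_one (x i)]
    have h1 := hgradp (x - T k) k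
    rw [sub_add_cancel] at h1
    rw [h1]
    exact hgrad_cube _ hy
  -- χ + ⟪ν, ·⟫ is constant
  set ψ : EuclideanSpace ℝ (Fin n) → ℝ := fun x => χ x + (innerSL ℝ ν) x with hψ
  have hψdiff : Differentiable ℝ ψ := hχdiff.add (innerSL ℝ ν).differentiable
  have hψfderiv : ∀ x, fderiv ℝ ψ x = 0 := by
    intro x
    have h1 : fderiv ℝ ψ x = fderiv ℝ χ x + innerSL ℝ ν := by
      rw [hψ]
      rw [fderiv_fun_add (hχdiff x) (innerSL ℝ ν).differentiableAt, (innerSL ℝ ν).fderiv]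
    have hg : (InnerProductSpace.toDual ℝ (EuclideanSpace ℝ (Fin n))).symm (fderiv ℝ χ x)
        = -ν := hgrad_all x
    have h2 : fderiv ℝ χ x = (InnerProductSpace.toDual ℝ (EuclideanSpace ℝ (Fin n))) (-ν) :=
      (InnerProductSpace.toDual ℝ (EuclideanSpace ℝ (Fin n))).symm_apply_eq.mp hg
    rw [h1, h2]
    ext w
    simp [InnerProductSpace.toDual_apply_apply, inner_neg_left]
  have hconst : ∀ x y, ψ x = ψ y := fun x y =>
    is_const_of_fderiv_eq_zero hψdiff hψfderiv x y
  -- conclude ν = 0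
  ext i
  have hTE : (0 : EuclideanSpace ℝ (Fin n)) + T (Pi.single i 1) = EuclideanSpace.single i 1 := by
    rw [zero_add]
    ext j
    simp only [hT]
    rw [sum_single_apply]
    simp [Pi.single_apply, EuclideanSpace.single_apply, eq_comm]
  have hper : χ (EuclideanSpace.single i 1) = χ 0 := by
    have := hχp 0 (Pi.single i 1)
    rwa [hTE] at this
  have hc := hconst (EuclideanSpace.single i 1) 0
  rw [hψ] at hc
  simp only [map_zero] at hc
  have hinner : (innerSL ℝ ν) (EuclideanSpace.single i 1) = ν i := by
    have h1 : (innerSL ℝ ν) (EuclideanSpace.single i 1)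
        = ⟪ν, EuclideanSpace.single i (1:ℝ)⟫ := rfl
    rw [h1, EuclideanSpace.inner_single_right, conj_trivial, one_mul]
  rw [hper, hinner] at hc
  have : ν i = 0 := by linarith
  simpa using this
end
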